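/- With Q constructed from a feasible Q' via the MAP map as described, the mutual information satisfies I_Q(X_A ∧ (Y_A, Y_{A^c})) = I_Q(X_A ∧ Y_A) = I_{Q'}(X_A ∧ Y_A) ≤ I_{Q'}(X_A ∧ (Y_A, Y_{A^c})). -/

import Mathlib

noncomputable section

/-- A probability mass function on a finite type. -/
def IsPMF {T : Type*} [Fintype T] (p : T → ℝ) : Prop :=
  (∀ t, 0 ≤ p t) ∧ ∑ t, p t = 1

/-- Mutual information of a joint pmf `Q` on a product of two finite types;
terms with `Q p = 0` vanish since `0 * log _ = 0`. -/
def mutInfo {α β : Type*} [Fintype α] [Fintype β] (Q : α × β → ℝ) : ℝ :=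
  ∑ p : α × β, Q p * Real.log (Q p / ((∑ b, Q (p.1, b)) * (∑ a, Q (a, p.2))))

variable {XA XAc Y : Type*} [Fintype XA] [Fintype XAc] [Fintype Y]

/-- The `𝒳_A`-marginal of `P`. -/
def margXA (P : XA × XAc → ℝ) (xa : XA) : ℝ := ∑ x', P (xa, x')

/-- Conditional pmf `P_{X_{A^c}|X_A}(x'|xa)`. -/
def condP (P : XA × XAc → ℝ) (x' : XAc) (xa : XA) : ℝ := P (xa, x') / margXA P xa

/-- The modified distortion measure `d_A`. -/
def dA (P : XA × XAc → ℝ) (d : XA × XAc → Y → ℝ) (xa : XA) (y : Y) : ℝ :=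
  ∑ x', condP P x' xa * d (xa, x') y

/-- Feasible joint pmfs: a pmf whose `(𝒳_A × 𝒳_{A^c})`-marginal equals `P` and
satisfying the Markov chain `X_{A^c} — X_A — Y`, i.e.
`Q(x_A,x_{A^c},y) ⬝ Q_{X_A}(x_A) = P(x_A,x_{A^c}) ⬝ Q_{X_A Y}(x_A,y)`. -/
def Feasible (P : XA × XAc → ℝ) (Q : (XA × XAc) × Y → ℝ) : Prop :=
  IsPMF Q ∧ (∀ x, ∑ y, Q (x, y) = P x) ∧
    ∀ xa x' y, Q ((xa, x'), y) * (∑ x'', ∑ y', Q ((xa, x''), y')) =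
      P (xa, x') * (∑ x'', Q ((xa, x''), y))

/-- Expected distortion of `Q`. -/
def expDist (d : XA × XAc → Y → ℝ) (Q : (XA × XAc) × Y → ℝ) : ℝ :=
  ∑ p : (XA × XAc) × Y, Q p * d p.1 p.2

/-- Marginal of `Q` on `(X_A, Y)`. -/
def margAY (Q : (XA × XAc) × Y → ℝ) : XA × Y → ℝ :=
  fun p => ∑ x', Q ((p.1, x'), p.2)

variable [DecidableEq XA] [DecidableEq XAc]

/-- The probability-of-error distortion measure on `𝒴 = 𝒳_A × 𝒳_{A^c}`. -/
def dErr : XA × XAc → XA × XAc → ℝ := fun x y => if x = y then 0 else 1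

/-- `α(x_A) = max_{x' ∈ 𝒳_{A^c}} P_{X_{A^c}|X_A}(x'|x_A)`. -/
def alphaF [Nonempty XAc] (P : XA × XAc → ℝ) (xa : XA) : ℝ :=
  Finset.univ.sup' Finset.univ_nonempty (fun x' => condP P x' xa)

/-- The fixed-set sampling rate distortion function `R_A(Δ)` for the
probability-of-error distortion. -/
def RAerr (P : XA × XAc → ℝ) (Δ : ℝ) : ℝ :=
  sInf {r | ∃ Q : (XA × XAc) × (XA × XAc) → ℝ,
    Feasible P Q ∧ expDist dErr Q ≤ Δ ∧ mutInfo (margAY Q) = r}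

private lemma dpi {α β γ : Type*} [Fintype α] [Fintype β] [Fintype γ]
    (p : α × (β × γ) → ℝ) (hp : ∀ z, 0 ≤ p z) :
    mutInfo (fun z : α × β => ∑ c, p (z.1, (z.2, c))) ≤ mutInfo p := by
  classical
  set q : α × β → ℝ := fun z => ∑ c, p (z.1, (z.2, c)) with hq
  have hqnn : ∀ z, 0 ≤ q z := fun z => Finset.sum_nonneg fun _ _ => hp _
  set pX : α → ℝ := fun a => ∑ y, p (a, y) with hpX
  set pY : β × γ → ℝ := fun y => ∑ a, p (a, y) with hpY
  set qT : β → ℝ := fun t => ∑ a, q (a, t) with hqT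
  have hqTnn : ∀ t, 0 ≤ qT t := fun t => Finset.sum_nonneg fun _ _ => hqnn _
  have hpYnn : ∀ y, 0 ≤ pY y := fun y => Finset.sum_nonneg fun _ _ => hp _
  have hqX : ∀ a, (∑ t, q (a, t)) = pX a := by
    intro a
    simp only [hq, hpX, Fintype.sum_prod_type]
  have hmp : mutInfo p = ∑ z : α × (β × γ),
      p z * Real.log (p z / (pX z.1 * pY z.2)) := rfl
  have stepA : mutInfo q = ∑ z : α × (β × γ),
      p z * Real.log (q (z.1, z.2.1) / (pX z.1 * qT z.2.1)) := by
    have hmq : mutInfo q = ∑ z : α × β,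
        q z * Real.log (q z / (pX z.1 * qT z.2)) := by
      rw [mutInfo]
      refine Finset.sum_congr rfl fun z _ => ?_
      rw [hqX]
    rw [hmq, Fintype.sum_prod_type, Fintype.sum_prod_type]
    refine Finset.sum_congr rfl fun a _ => ?_
    rw [Fintype.sum_prod_type]
    refine Finset.sum_congr rfl fun t _ => ?_
    have : q (a, t) * Real.log (q (a, t) / (pX a * qT t)) =
        ∑ c, p (a, (t, c)) * Real.log (q (a, t) / (pX a * qT t)) := by
      rw [← Finset.sum_mul]
    exact this
  set r : α × (β × γ) → ℝ := fun z => pY z.2 * q (z.1, z.2.1) / qT z.2.1 with hr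
  have hrnn : ∀ z, 0 ≤ r z := fun z =>
    div_nonneg (mul_nonneg (hpYnn _) (hqnn _)) (hqTnn _)
  have stepB : ∀ z : α × (β × γ),
      p z * Real.log (q (z.1, z.2.1) / (pX z.1 * qT z.2.1)) + (p z - r z) ≤
      p z * Real.log (p z / (pX z.1 * pY z.2)) := by
    intro z
    by_cases hz : p z = 0
    · have := hrnn z
      simp only [hz, zero_mul, zero_add, zero_sub]
      linarith
    · have hpz : 0 < p z := lt_of_le_of_ne (hp z) (Ne.symm hz)
      have hqz : p z ≤ q (z.1, z.2.1) := by
        have := Finset.single_le_sum (f := fun c => p (z.1, (z.2.1, c)))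
          (fun c _ => hp _) (Finset.mem_univ z.2.2)
        simpa using this
      have hqpos : 0 < q (z.1, z.2.1) := lt_of_lt_of_le hpz hqz
      have hpXpos : 0 < pX z.1 := lt_of_lt_of_le hpz (by
        have := Finset.single_le_sum (f := fun y => p (z.1, y))
          (fun y _ => hp _) (Finset.mem_univ z.2)
        simpa [hpX] using this)
      have hpYpos : 0 < pY z.2 := lt_of_lt_of_le hpz (by
        have := Finset.single_le_sum (f := fun a => p (a, z.2))
          (fun a _ => hp _) (Finset.mem_univ z.1)
        simpa [hpY] using this)
      have hqTpos : 0 < qT z.2.1 := lt_of_lt_of_le hqpos (by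
        have := Finset.single_le_sum (f := fun a => q (a, z.2.1))
          (fun a _ => hqnn _) (Finset.mem_univ z.1)
        simpa [hqT] using this)
      have key : Real.log (p z / (pX z.1 * pY z.2)) =
          Real.log (q (z.1, z.2.1) / (pX z.1 * qT z.2.1)) +
          Real.log ((p z * qT z.2.1) / (pY z.2 * q (z.1, z.2.1))) := by
        rw [← Real.log_mul (by positivity) (by positivity)]
        congr 1
        field_simp
      have hlog : 1 - (pY z.2 * q (z.1, z.2.1)) / (p z * qT z.2.1) ≤
          Real.log ((p z * qT z.2.1) / (pY z.2 * q (z.1, z.2.1))) := by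
        have hx : (0:ℝ) < (pY z.2 * q (z.1, z.2.1)) / (p z * qT z.2.1) := by positivity
        have h1 := Real.log_le_sub_one_of_pos hx
        have h2 : Real.log ((p z * qT z.2.1) / (pY z.2 * q (z.1, z.2.1))) =
            - Real.log ((pY z.2 * q (z.1, z.2.1)) / (p z * qT z.2.1)) := by
          rw [← Real.log_inv]
          congr 1
          rw [inv_div]
        linarith
      have hmul : p z * (1 - (pY z.2 * q (z.1, z.2.1)) / (p z * qT z.2.1)) =
          p z - r z := by
        rw [hr]
        field_simp
      have := mul_le_mul_of_nonneg_left hlog (hp z)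
      rw [hmul] at this
      rw [key, mul_add]
      linarith
  have stepC : 0 ≤ ∑ z : α × (β × γ), (p z - r z) := by
    rw [Finset.sum_sub_distrib, sub_nonneg]
    have hsum : ∀ y : β × γ, ∑ a, r (a, y) ≤ pY y := by
      intro y
      have : ∑ a, r (a, y) = pY y * qT y.1 / qT y.1 := by
        simp only [hr]
        rw [← Finset.sum_div, ← Finset.mul_sum]
      rw [this]
      by_cases h : qT y.1 = 0
      · simp [h]
        exact hpYnn y
      · rw [mul_div_assoc, div_self h, mul_one]
    calc ∑ z : α × (β × γ), r z = ∑ y : β × γ, ∑ a, r (a, y) := by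
          rw [Fintype.sum_prod_type]; exact Finset.sum_comm
      _ ≤ ∑ y : β × γ, pY y := Finset.sum_le_sum fun y _ => hsum y
      _ = ∑ y : β × γ, ∑ a : α, p (a, y) := by simp only [hpY]
      _ = ∑ a : α, ∑ y : β × γ, p (a, y) := Finset.sum_comm
      _ = ∑ z : α × (β × γ), p z := (Fintype.sum_prod_type _).symm
  calc mutInfo q = mutInfo q + 0 := by ring
    _ ≤ (∑ z : α × (β × γ), p z * Real.log (q (z.1, z.2.1) / (pX z.1 * qT z.2.1)))
        + ∑ z : α × (β × γ), (p z - r z) := by rw [stepA]; linarith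
    _ = ∑ z : α × (β × γ),
        (p z * Real.log (q (z.1, z.2.1) / (pX z.1 * qT z.2.1)) + (p z - r z)) := by
          rw [Finset.sum_add_distrib]
    _ ≤ ∑ z : α × (β × γ), p z * Real.log (p z / (pX z.1 * pY z.2)) :=
          Finset.sum_le_sum fun z _ => stepB z
    _ = mutInfo p := hmp.symm

private lemma mi_det {α β γ : Type*} [Fintype α] [Fintype β] [Fintype γ] [DecidableEq γ]
    (f : α × β → ℝ) (g : β → γ) :
    mutInfo (fun z : α × (β × γ) => f (z.1, z.2.1) * (if z.2.2 = g z.2.1 then 1 else 0)) =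
      mutInfo f := by
  classical
  have hRX : ∀ a : α, (∑ b : β × γ, if b.2 = g b.1 then f (a, b.1) else 0) =
      ∑ t, f (a, t) := by
    intro a
    rw [Fintype.sum_prod_type]
    refine Finset.sum_congr rfl fun t _ => ?_
    simp
  rw [mutInfo, mutInfo, Fintype.sum_prod_type, Fintype.sum_prod_type]
  refine Finset.sum_congr rfl fun a _ => ?_
  rw [Fintype.sum_prod_type]
  refine Finset.sum_congr rfl fun t _ => ?_
  have hterm : ∀ c : γ,
      (f (a, t) * (if c = g t then 1 else 0)) * Real.log
        ((f (a, t) * (if c = g t then 1 else 0)) /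
          ((∑ b : β × γ, f (a, b.1) * (if b.2 = g b.1 then 1 else 0)) *
            (∑ a', f (a', t) * (if c = g t then 1 else 0)))) =
      if c = g t then
        f (a, t) * Real.log (f (a, t) / ((∑ b, f (a, b)) * (∑ a', f (a', t)))) else 0 := by
    intro c
    by_cases h : c = g t
    · simp [h, hRX]
    · simp [h]
  rw [Finset.sum_congr rfl fun c _ => hterm c, Finset.sum_ite_eq' Finset.univ (g t)]
  simp

/-- The joint pmf `Q` built from `Q'` via the MAP estimate. -/
def mapQ (Q' : (XA × XAc) × (XA × XAc) → ℝ) (MAP : XA → XAc) :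
    (XA × XAc) × (XA × XAc) → ℝ :=
  fun p => (∑ y', Q' (p.1, (p.2.1, y'))) * (if p.2.2 = MAP p.2.1 then 1 else 0)

/-- Marginal of a joint pmf on `(X_A, X_{A^c}) × (Y_A, Y_{A^c})` on the pair `(X_A, Y_A)`. -/
def margAYA (Q : (XA × XAc) × (XA × XAc) → ℝ) : XA × XA → ℝ :=
  fun p => ∑ x' : XAc, ∑ y' : XAc, Q ((p.1, x'), (p.2, y'))

/-- `I_Q(X_A ∧ (Y_A,Y_{A^c})) = I_Q(X_A ∧ Y_A) = I_{Q'}(X_A ∧ Y_A) ≤ I_{Q'}(X_A ∧ (Y_A,Y_{A^c}))`. -/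
theorem stmt6 [Nonempty XA] [Nonempty XAc]
    (P : XA × XAc → ℝ) (hP : IsPMF P) (hfull : ∀ x, 0 < P x)
    (Q' : (XA × XAc) × (XA × XAc) → ℝ) (hQ' : Feasible P Q')
    (MAP : XA → XAc) (hMAP : ∀ ya x', condP P x' ya ≤ condP P (MAP ya) ya) :
    mutInfo (margAY (mapQ Q' MAP)) = mutInfo (margAYA (mapQ Q' MAP)) ∧
    mutInfo (margAYA (mapQ Q' MAP)) = mutInfo (margAYA Q') ∧
    mutInfo (margAYA Q') ≤ mutInfo (margAY Q') := by
  classical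
  have hQnn : ∀ z, 0 ≤ Q' z := hQ'.1.1
  -- Part 2: the (X_A, Y_A)-marginals agree
  have h2 : margAYA (mapQ Q' MAP) = margAYA Q' := by
    funext z
    simp only [margAYA, mapQ, mul_ite, mul_one, mul_zero]
    refine Finset.sum_congr rfl fun x' _ => ?_
    simp [Finset.sum_ite_eq']
  -- Part 1: margAY (mapQ Q' MAP) has the deterministic form
  have h1 : margAY (mapQ Q' MAP) = fun z : XA × (XA × XAc) =>
      margAYA Q' (z.1, z.2.1) * (if z.2.2 = MAP z.2.1 then 1 else 0) := by
    funext z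
    simp only [margAY, mapQ, margAYA]
    rw [Finset.sum_mul]
  have e1 : mutInfo (margAY (mapQ Q' MAP)) = mutInfo (margAYA Q') := by
    rw [h1]
    exact mi_det (margAYA Q') MAP
  -- Part 3: data processing
  have h3 : margAYA Q' = fun z : XA × XA => ∑ c : XAc, margAY Q' (z.1, (z.2, c)) := by
    funext z
    simp only [margAYA, margAY]
    exact Finset.sum_comm
  refine ⟨by rw [e1, h2], by rw [h2], ?_⟩
  rw [h3]
  exact dpi (margAY Q') fun z => Finset.sum_nonneg fun _ _ => hQnn _
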